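/- arXiv:1802.03261 — 4 statements merged into one kernel-verified Lean document; each statement's English description precedes it below -/
import Mathlib

section
/- Let p be a prime and A a commutative ring with no p-torsion (p is a nonzerodivisor on A), equipped with a ring endomorphism φ. Define the Nygaard filtration N^{≥i} := {x ∈ A : φ(x) ∈ p^i·A} for i ≥ 0. Then the completion Â := lim_i A/N^{≥i} has no p-torsion. -/
/-- Let `A` be a commutative ring with no `p`-torsion, `φ : A → A` a ring endomorphism, and
`N^{≥i} := {x : φ x ∈ p^i A}` the Nygaard filtration. Then the completion
`Â = lim_i A/N^{≥i}` has no `p`-torsion. Element-wise: if `(a i)` is a compatible system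
(`a (i+1) ≡ a i mod N^{≥i}`) representing an element of `Â` which is killed by `p`
(`p·a i ∈ N^{≥i}` for all `i`), then the element is zero (`a i ∈ N^{≥i}` for all `i`). -/
theorem stmt_8 (p : ℕ) (hp : p.Prime) {A : Type*} [CommRing A]
    (hreg : ∀ a : A, (p : A) * a = 0 → a = 0)
    (φ : A →+* A) (a : ℕ → A)
    (hcompat : ∀ i, (p : A) ^ i ∣ φ (a (i + 1) - a i))
    (htors : ∀ i, (p : A) ^ i ∣ φ ((p : A) * a i)) :
    ∀ i, (p : A) ^ i ∣ φ (a i) := by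
  intro i
  -- from torsion at level i+1: p^i ∣ φ (a (i+1))
  obtain ⟨c, hc⟩ := htors (i + 1)
  have h1 : (p : A) ^ i ∣ φ (a (i + 1)) := by
    refine ⟨c, ?_⟩
    have key : (p : A) * (φ (a (i + 1)) - (p : A) ^ i * c) = 0 := by
      simp only [map_mul, map_natCast, pow_succ] at hc
      linear_combination hc
    have := hreg _ key
    exact sub_eq_zero.mp this
  have h2 := hcompat i
  have : φ (a i) = φ (a (i + 1)) - φ (a (i + 1) - a i) := by
    rw [map_sub]; ring
  rw [this]
  exact dvd_sub h1 h2
end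

section
/- Let p be a prime and N an abelian group with bounded p-power torsion, i.e., there exists c ≥ 0 with N[p^n] = N[p^c] for all n ≥ c. Then the p-adic completion N̂ = lim_n N/p^n N also has bounded p-power torsion; in fact N̂[p^∞] = N̂[p^c] for the same c. -/
/-- If an abelian group `N` has bounded `p`-power torsion (every element killed by a power
of `p` is killed by `p^c`), then its `p`-adic completion `N̂ = lim_n N/p^n N` has
`N̂[p^∞] = N̂[p^c]`. Element-wise: if `(a n)` is a compatible system (`a (n+1) ≡ a n mod
p^n N`) representing an element of `N̂` which is killed by `p^m` for some `m`
(`p^m · a n ∈ p^n N` for all `n`), then it is killed by `p^c`. -/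
theorem stmt_10 (p : ℕ) (hp : p.Prime) {N : Type*} [AddCommGroup N] (c : ℕ)
    (hbdd : ∀ (n : ℕ) (x : N), p ^ n • x = 0 → p ^ c • x = 0)
    (a : ℕ → N) (hcompat : ∀ n, ∃ b : N, a (n + 1) - a n = p ^ n • b)
    (m : ℕ) (htors : ∀ n, ∃ b : N, p ^ m • a n = p ^ n • b) :
    ∀ n, ∃ b : N, p ^ c • a n = p ^ n • b := by
  intro n
  -- telescoping: a (n+k) - a n ∈ p^n N
  have key : ∀ k, ∃ d : N, a (n + k) - a n = p ^ n • d := by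
    intro k
    induction k with
    | zero => exact ⟨0, by simp⟩
    | succ k ih =>
      obtain ⟨d, hd⟩ := ih
      obtain ⟨b, hb⟩ := hcompat (n + k)
      refine ⟨d + p ^ k • b, ?_⟩
      have : a (n + (k + 1)) - a n = (a (n + k) - a n) + (a (n + k + 1) - a (n + k)) := by
        rw [show n + (k + 1) = n + k + 1 by ring]; abel
      rw [this, hd, hb, smul_add, smul_smul, ← pow_add]
  obtain ⟨d, hd⟩ := key m
  obtain ⟨b, hb⟩ := htors (n + m)
  have h1 : p ^ m • (a (n + m) - p ^ n • b) = 0 := by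
    rw [smul_sub, hb, smul_smul, ← pow_add, add_comm m n, sub_self]
  have h2 : p ^ c • (a (n + m) - p ^ n • b) = 0 := hbdd m _ h1
  have h3 : a n = a (n + m) - p ^ n • d := by rw [← hd]; abel
  refine ⟨p ^ c • b - p ^ c • d, ?_⟩
  have h2' : p ^ c • a (n + m) = p ^ c • (p ^ n • b) :=
    sub_eq_zero.mp (by rw [← smul_sub]; exact h2)
  rw [h3, smul_sub, h2', smul_sub, smul_comm (p ^ c) (p ^ n) b, smul_comm (p ^ c) (p ^ n) d]
end

section
/- Let O be a valuation ring whose maximal ideal 𝔪 satisfies 𝔪 = 𝔪². Then the natural map O → Hom_O(𝔪, O), sending a to the multiplication-by-a map, is an isomorphism of O-modules. -/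
/-- Let `O` be a valuation ring whose maximal ideal `𝔪` is nonzero and satisfies `𝔪 = 𝔪²`.
Then the natural map `O → Hom_O(𝔪, O)`, sending `a` to multiplication by `a`, is
bijective (an isomorphism of `O`-modules). -/
theorem stmt_14 {O : Type*} [CommRing O] [IsDomain O] [ValuationRing O]
    (hm : IsLocalRing.maximalIdeal O * IsLocalRing.maximalIdeal O = IsLocalRing.maximalIdeal O)
    (hm0 : IsLocalRing.maximalIdeal O ≠ ⊥) :
    Function.Bijective (fun a : O =>
      (a • (IsLocalRing.maximalIdeal O).subtype : IsLocalRing.maximalIdeal O →ₗ[O] O)) := by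
  set m := IsLocalRing.maximalIdeal O with hmdef
  obtain ⟨x, hx, hx0⟩ := Submodule.exists_mem_ne_zero_of_ne_bot hm0
  constructor
  · intro a b h
    have := LinearMap.congr_fun h ⟨x, hx⟩
    simp only [LinearMap.smul_apply, Submodule.subtype_apply, smul_eq_mul] at this
    exact mul_right_cancel₀ hx0 this
  · intro φ
    set K := FractionRing O
    set i := algebraMap O K with hi
    have hinj : Function.Injective i := IsFractionRing.injective O K
    have hix : i x ≠ 0 := fun h => hx0 (hinj (by simpa using h))
    -- symmetry: x * φ y = y * φ x
    have key : ∀ y : m, x * φ y = (y : O) * φ ⟨x, hx⟩ := by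
      intro y
      have h1 : x • (y : m) = (y : O) • (⟨x, hx⟩ : m) := by
        ext; simp [mul_comm]
      calc x * φ y = φ (x • y) := by rw [map_smul]; simp
        _ = φ ((y : O) • ⟨x, hx⟩) := by rw [h1]
        _ = (y : O) * φ ⟨x, hx⟩ := by rw [map_smul]; simp
    set a : K := i (φ ⟨x, hx⟩) / i x with ha
    have hay : ∀ y : m, a * i y = i (φ y) := by
      intro y
      rw [ha, div_mul_eq_mul_div, ← map_mul, mul_comm (φ ⟨x, hx⟩), div_eq_iff hix,
        ← map_mul]
      exact congrArg i (by rw [← key y, mul_comm])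
    -- a is integral
    have hint : ∃ b : O, i b = a := by
      rcases ValuationRing.isInteger_or_isInteger O a with ⟨b, hb⟩ | ⟨c, hc⟩
      · exact ⟨b, hb⟩
      by_cases ha0 : a = 0
      · exact ⟨0, by simp [ha0]⟩
      have hc0 : c ≠ 0 := by
        rintro rfl
        simp only [map_zero] at hc
        exact ha0 (by simpa using congrArg (· ⁻¹) hc.symm)
      by_cases hcu : IsUnit c
      · obtain ⟨u, rfl⟩ := hcu
        refine ⟨((u⁻¹ : Oˣ) : O), ?_⟩
        have h1 : i ((u⁻¹ : Oˣ) : O) = (i (u : O))⁻¹ :=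
          eq_inv_of_mul_eq_one_left (by rw [← map_mul]; norm_num)
        rw [h1, show i (u : O) = a⁻¹ from hc, inv_inv]
      · exfalso
        have hcm : c ∈ m := hcu
        have hcm2 : c ∈ m * m := by rw [hm]; exact hcm
        have : ∃ w ∈ m, a * i c = i w := by
          refine Submodule.mul_induction_on hcm2 ?_ ?_
          · intro y hy z hz
            refine ⟨φ ⟨y, hy⟩ * z, Ideal.mul_mem_left _ _ hz, ?_⟩
            rw [map_mul, map_mul, ← mul_assoc, hay ⟨y, hy⟩]
          · rintro d e ⟨w1, hw1, h1⟩ ⟨w2, hw2, h2⟩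
            exact ⟨w1 + w2, Ideal.add_mem _ hw1 hw2, by rw [map_add, mul_add, h1, h2, map_add]⟩
        obtain ⟨w, hw, hweq⟩ := this
        have h1 : a * i c = 1 := by rw [show i c = a⁻¹ from hc, mul_inv_cancel₀ ha0]
        have : w = 1 := hinj (by rw [← hweq, h1, map_one])
        exact (IsLocalRing.maximalIdeal.isMaximal O).ne_top
          (Ideal.eq_top_iff_one _ |>.mpr (this ▸ hw))
    obtain ⟨b, hb⟩ := hint
    refine ⟨b, ?_⟩
    ext ⟨y, hy⟩
    simp only [LinearMap.smul_apply, Submodule.subtype_apply, smul_eq_mul]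
    apply hinj
    rw [map_mul, hb, hay ⟨y, hy⟩]
end

section
/- Let A be a commutative ring, f ∈ A a nonzerodivisor, and C^• a cochain complex of A-modules each of which is f-torsionfree. Define the subcomplex (η_f C)^n := {x ∈ f^n·C^n : dx ∈ f^{n+1}·C^{n+1}} of C^•[1/f]. Then for every i, multiplication by f^i induces an isomorphism H^i(C^•)/H^i(C^•)[f] ≅ H^i(η_f C^•), where H^i(C^•)[f] denotes the f-torsion submodule of H^i(C^•). -/
/-- Let `A` be a commutative ring, `f ∈ A` a nonzerodivisor, and `C^•` a (nonnegatively
graded) cochain complex of `f`-torsionfree `A`-modules. Let `η_f C` be the subcomplex with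
`(η_f C)^n = {x ∈ f^n C^n : d x ∈ f^{n+1} C^{n+1}}`. Then for every `i`, multiplication by
`f^i` induces an isomorphism `H^i(C)/H^i(C)[f] ≅ H^i(η_f C)`. This is expressed
element-wise: in degree `0` the induced map is the tautological identification, and in each
degree `i+1` the map sends the class of a cocycle `x` to the class of `f^{i+1}·x`; it is
well-defined, surjective, and its kernel is exactly the `f`-torsion of `H^{i+1}(C)`. -/
theorem stmt_15 {A : Type*} [CommRing A] (f : A)
    (hf : ∀ a : A, f * a = 0 → a = 0)
    (C : ℕ → Type*) [∀ n, AddCommGroup (C n)] [∀ n, Module A (C n)]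
    (d : ∀ n, C n →ₗ[A] C (n + 1))
    (hdd : ∀ (n : ℕ) (x : C n), d (n + 1) (d n x) = 0)
    (htf : ∀ (n : ℕ) (x : C n), f • x = 0 → x = 0) :
    let Eta : ∀ n, C n → Prop := fun n x =>
      (∃ y : C n, x = f ^ n • y) ∧ ∃ z : C (n + 1), d n x = f ^ (n + 1) • z
    -- degree 0 : every cocycle of `C` is an `η_f`-cocycle (and `H^0(C)[f] = 0`),
    -- so multiplication by `f^0 = 1` identifies `H^0(C)/H^0(C)[f]` with `H^0(η_f C)`
    (∀ x : C 0, d 0 x = 0 → Eta 0 x) ∧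
    -- degrees `i + 1`
    (∀ i : ℕ,
      -- well-defined: `f^{i+1}·x` is an `η_f`-cocycle for every cocycle `x`
      (∀ x : C (i + 1), d (i + 1) x = 0 → Eta (i + 1) (f ^ (i + 1) • x)) ∧
      -- surjective: every `η_f`-cocycle agrees with some `f^{i+1}·x` up to an `η_f`-boundary
      (∀ w : C (i + 1), Eta (i + 1) w → d (i + 1) w = 0 →
        ∃ x : C (i + 1), d (i + 1) x = 0 ∧
          ∃ u : C i, Eta i u ∧ w = f ^ (i + 1) • x + d i u) ∧
      -- kernel: `f^{i+1}·x` is an `η_f`-boundary iff the class of `x` is `f`-torsion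
      (∀ x : C (i + 1), d (i + 1) x = 0 →
        ((∃ u : C i, Eta i u ∧ f ^ (i + 1) • x = d i u) ↔
          ∃ b : C i, f • x = d i b))) := by
  intro Eta
  -- powers of f act torsion-freely
  have htfp : ∀ (k : ℕ) (n : ℕ) (x : C n), f ^ k • x = 0 → x = 0 := by
    intro k
    induction k with
    | zero => intro n x h; simpa using h
    | succ k ih =>
      intro n x h
      rw [pow_succ, mul_comm, mul_smul] at h
      exact ih n x (htf n _ h)
  have hcancel : ∀ (k n : ℕ) (x y : C n), f ^ k • x = f ^ k • y → x = y := by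
    intro k n x y h
    have : f ^ k • (x - y) = 0 := by rw [smul_sub, h, sub_self]
    exact sub_eq_zero.mp (htfp k n (x - y) this)
  refine ⟨?_, ?_⟩
  · intro x hx
    exact ⟨⟨x, by simp⟩, ⟨0, by simp [hx]⟩⟩
  · intro i
    refine ⟨?_, ?_, ?_⟩
    · intro x hx
      exact ⟨⟨x, rfl⟩, ⟨0, by simp [map_smul, hx]⟩⟩
    · intro w hw hdw
      obtain ⟨⟨y, hy⟩, -⟩ := hw
      rw [hy, map_smul] at hdw
      have hdy : d (i + 1) y = 0 := htfp (i + 1) _ _ hdw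
      exact ⟨y, hdy, 0, ⟨⟨0, by simp⟩, ⟨0, by simp⟩⟩, by simp [hy]⟩
    · intro x hx
      constructor
      · rintro ⟨u, ⟨⟨v, hv⟩, -⟩, hu⟩
        refine ⟨v, ?_⟩
        apply hcancel i
        rw [hv, map_smul] at hu
        rw [← hu, pow_succ, mul_comm, mul_smul, smul_comm]
      · rintro ⟨b, hb⟩
        refine ⟨f ^ i • b, ⟨⟨b, rfl⟩, ⟨x, by rw [map_smul, ← hb, pow_succ, mul_comm, mul_smul, smul_comm]⟩⟩, ?_⟩
        rw [map_smul, ← hb, pow_succ, mul_comm, mul_smul, smul_comm]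
end
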